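/- Let λ ∈ F_{q^m}^* with N(λ) of order q-1 in F_q^*, let {a_1,...,a_m} be a basis of F_{q^m} over F_q, and let K be the fixed field of φ_{q,λ} in F_{q^m}(x). Then the set B = {a_i x^j : 1 ≤ i ≤ m, 0 ≤ j ≤ q-2} of m(q-1) elements is a basis of F_{q^m}(x) as a K-vector space. -/

import Mathlib

/-- The fixed subfield of a field automorphism. -/
def fixedSubfield {F : Type*} [Field F] (e : F ≃+* F) : Subfield F where
  carrier := {a | e a = a}
  mul_mem' := by intro a b ha hb; simp only [Set.mem_setOf_eq, map_mul] at *; rw [ha, hb]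
  one_mem' := by simp
  add_mem' := by intro a b ha hb; simp only [Set.mem_setOf_eq, map_add] at *; rw [ha, hb]
  zero_mem' := by simp
  neg_mem' := by intro a ha; simp only [Set.mem_setOf_eq, map_neg] at *; rw [ha]
  inv_mem' := by intro a ha; simp only [Set.mem_setOf_eq, map_inv₀] at *; rw [ha]

open Finset Polynomial

set_option maxHeartbeats 1000000
set_option synthInstance.maxHeartbeats 400000

section Aux

variable {F : Type*} [Field F]

lemma stmt6_pow_formula (q : ℕ) (lam : F) (σ : RingAut (RatFunc F))
    (hC : ∀ c : F, σ (algebraMap F (RatFunc F) c) = algebraMap F (RatFunc F) (c ^ q))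
    (hX : σ RatFunc.X = algebraMap F (RatFunc F) lam * RatFunc.X) (k : ℕ) :
    (∀ c : F, (σ ^ k) (algebraMap F (RatFunc F) c) = algebraMap F (RatFunc F) (c ^ q ^ k)) ∧
      (σ ^ k) RatFunc.X = algebraMap F (RatFunc F) (lam ^ ∑ i ∈ Finset.range k, q ^ i)
        * RatFunc.X := by
  induction k with
  | zero =>
    refine ⟨fun c => ?_, ?_⟩
    · simp only [pow_zero, pow_one]; rfl
    · simp only [Finset.range_zero, Finset.sum_empty, pow_zero, map_one, one_mul]; rfl
  | succ n ih =>
    have happ : ∀ x : RatFunc F, (σ ^ (n+1)) x = (σ ^ n) (σ x) := by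
      intro x; rw [pow_succ]; rfl
    obtain ⟨ihC, ihX⟩ := ih
    refine ⟨fun c => ?_, ?_⟩
    · rw [happ, hC, ihC, ← pow_mul, pow_succ, Nat.mul_comm]
    · rw [happ, hX, map_mul, ihX, ← mul_assoc, ihC, ← map_mul, ← pow_add,
        Finset.sum_range_succ, Nat.add_comm]

lemma stmt6_eq_one (σ : RingAut (RatFunc F))
    (hC : ∀ c : F, σ (algebraMap F (RatFunc F) c) = algebraMap F (RatFunc F) c)
    (hX : σ RatFunc.X = RatFunc.X) : σ = 1 := by
  have hpoly : (σ : RatFunc F →+* RatFunc F).comp (algebraMap (Polynomial F) (RatFunc F)) =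
      algebraMap (Polynomial F) (RatFunc F) := by
    apply Polynomial.ringHom_ext
    · intro c
      simpa [RatFunc.algebraMap_C, RatFunc.algebraMap_eq_C] using hC c
    · simpa [RatFunc.algebraMap_X] using hX
  have h2 : (σ : RatFunc F →+* RatFunc F) = RingHom.id (RatFunc F) := by
    apply IsLocalization.ringHom_ext (nonZeroDivisors (Polynomial F))
    simpa using hpoly
  ext x
  exact DFunLike.congr_fun h2 x

lemma stmt6_nt_dvd (q m k : ℕ) (hq : 2 ≤ q) (hm : 0 < m)
    (h : (q ^ m - 1) ∣ (q ^ k - 1)) : m ∣ k := by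
  set n := q ^ m - 1 with hn
  have hqm1 : 1 ≤ q ^ m := Nat.one_le_pow _ _ (by omega)
  have hcast : ∀ j : ℕ, ((q ^ j - 1 : ℕ) : ZMod n) = (q : ZMod n) ^ j - 1 := by
    intro j
    have : 1 ≤ q ^ j := Nat.one_le_pow _ _ (by omega)
    push_cast [Nat.cast_sub this]
    ring
  have hqm : (q : ZMod n) ^ m = 1 := by
    have : ((q ^ m - 1 : ℕ) : ZMod n) = 0 := by
      rw [hn]; exact_mod_cast (ZMod.natCast_self _)
    rw [hcast] at this
    linear_combination this
  have hk : (q : ZMod n) ^ k = 1 := by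
    have : ((q ^ k - 1 : ℕ) : ZMod n) = 0 := (ZMod.natCast_eq_zero_iff _ _).mpr h
    rw [hcast] at this
    linear_combination this
  have hr : (q : ZMod n) ^ (k % m) = 1 := by
    conv at hk => rw [← Nat.div_add_mod k m]
    rw [pow_add, pow_mul, hqm, one_pow, one_mul] at hk
    exact hk
  have hdvd : n ∣ q ^ (k % m) - 1 := by
    rw [← ZMod.natCast_eq_zero_iff, hcast]
    linear_combination hr
  have hlt : q ^ (k % m) - 1 < n := by
    have h1 : q ^ (k % m) < q ^ m := Nat.pow_lt_pow_right hq (Nat.mod_lt _ hm)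
    have h2 : 1 ≤ q ^ (k % m) := Nat.one_le_pow _ _ (by omega)
    omega
  have h0 : q ^ (k % m) - 1 = 0 := Nat.eq_zero_of_dvd_of_lt hdvd hlt
  have h2 : 1 ≤ q ^ (k % m) := Nat.one_le_pow _ _ (by omega)
  have h3 : q ^ (k % m) = 1 := by omega
  have : k % m = 0 := by
    by_contra hne
    have := Nat.one_lt_pow hne (by omega : 1 < q)
    omega
  exact Nat.dvd_of_mod_eq_zero this

lemma stmt6_geo_split (q m u : ℕ) :
    ∑ i ∈ range (m * u), q ^ i = (∑ i ∈ range m, q ^ i) * ∑ i ∈ range u, (q ^ m) ^ i := by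
  induction u with
  | zero => simp
  | succ n ih =>
    rw [Nat.mul_succ, Finset.sum_range_add, ih, Finset.sum_range_succ, Nat.mul_add]
    congr 1
    simp only [pow_add, ← pow_mul]
    rw [← Finset.mul_sum, mul_comm]

lemma stmt6_nt_mod {m : ℕ} (q u : ℕ) (hq : 2 ≤ q) :
    ((q - 1) ∣ ∑ i ∈ range u, (q ^ m) ^ i) ↔ (q - 1) ∣ u := by
  have h1 : ((q : ZMod (q - 1))) = 1 := by
    have h0 : ((q - 1 : ℕ) : ZMod (q - 1)) = 0 := ZMod.natCast_self _
    have h2 : (q : ℕ) = (q - 1) + 1 := by omega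
    rw [h2]
    push_cast [h0]
    ring
  have : NeZero (q - 1) := ⟨by omega⟩
  rw [← ZMod.natCast_eq_zero_iff, ← ZMod.natCast_eq_zero_iff u (q-1)]
  push_cast
  rw [h1]
  simp

lemma stmt6_orderOf [Fintype F] (q m : ℕ) (hq : 2 ≤ q) (hm : 0 < m)
    (hcard : Fintype.card F = q ^ m) (lam : F)
    (hnorm : orderOf (lam ^ ((q ^ m - 1) / (q - 1))) = q - 1)
    (σ : RingAut (RatFunc F))
    (hC : ∀ c : F, σ (algebraMap F (RatFunc F) c) = algebraMap F (RatFunc F) (c ^ q))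
    (hX : σ RatFunc.X = algebraMap F (RatFunc F) lam * RatFunc.X) :
    orderOf σ = m * (q - 1) := by
  have injA : Function.Injective (algebraMap F (RatFunc F)) := (algebraMap F (RatFunc F)).injective
  rw [← Nat.geomSum_eq hq m] at hnorm
  have key2 : σ ^ (m * (q - 1)) = 1 := by
    apply stmt6_eq_one
    · intro c
      rw [(stmt6_pow_formula q lam σ hC hX _).1 c]
      congr 1
      rw [pow_mul, ← hcard]
      exact FiniteField.pow_card_pow _ _
    · rw [(stmt6_pow_formula q lam σ hC hX _).2]
      have : lam ^ ∑ i ∈ range (m * (q-1)), q ^ i = 1 := by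
        rw [stmt6_geo_split, pow_mul]
        rw [← orderOf_dvd_iff_pow_eq_one, hnorm]
        exact (stmt6_nt_mod q (q-1) hq).mpr dvd_rfl
      rw [this, map_one, one_mul]
  have key1 : ∀ k : ℕ, σ ^ k = 1 → (m * (q - 1)) ∣ k := by
    intro k hk
    have hc : ∀ c : F, c ^ q ^ k = c := by
      intro c
      apply injA
      rw [← (stmt6_pow_formula q lam σ hC hX k).1 c, hk]
      rfl
    have hmk : m ∣ k := by
      classical
      have : Fintype Fˣ := Fintype.ofFinite _
      obtain ⟨g, hg⟩ := IsCyclic.exists_generator (α := Fˣ)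
      have horder : orderOf g = q ^ m - 1 := by
        rw [orderOf_eq_card_of_forall_mem_zpowers hg, Nat.card_units,
          Nat.card_eq_fintype_card, hcard]
      have hgg : g ^ (q ^ k) = g := by
        ext
        push_cast [Units.val_pow_eq_pow_val]
        exact hc g
      have hpos : 1 ≤ q ^ k := Nat.one_le_pow _ _ (by omega)
      have hg1 : g ^ (q ^ k - 1) = 1 := by
        have : g ^ ((q ^ k - 1) + 1) = g := by rw [Nat.sub_add_cancel hpos]; exact hgg
        rw [pow_succ] at this
        calc g ^ (q ^ k - 1) = g ^ (q ^ k - 1) * g * g⁻¹ := by group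
        _ = g * g⁻¹ := by rw [this]
        _ = 1 := mul_inv_cancel g
      have := orderOf_dvd_of_pow_eq_one hg1
      rw [horder] at this
      exact stmt6_nt_dvd q m k hq hm this
    obtain ⟨u, hu⟩ := hmk
    have hXk : lam ^ ∑ i ∈ range k, q ^ i = 1 := by
      have h1 : (σ ^ k) RatFunc.X = RatFunc.X := by rw [hk]; rfl
      rw [(stmt6_pow_formula q lam σ hC hX k).2] at h1
      apply injA
      rw [map_one]
      have hXne : (RatFunc.X : RatFunc F) ≠ 0 := RatFunc.X_ne_zero
      calc algebraMap F (RatFunc F) (lam ^ ∑ i ∈ range k, q ^ i)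
          = algebraMap F (RatFunc F) (lam ^ ∑ i ∈ range k, q ^ i) * RatFunc.X * RatFunc.X⁻¹ := by
            field_simp
        _ = RatFunc.X * RatFunc.X⁻¹ := by rw [h1]
        _ = 1 := by field_simp
    rw [hu, stmt6_geo_split, pow_mul, ← orderOf_dvd_iff_pow_eq_one, hnorm,
      stmt6_nt_mod q u hq] at hXk
    rw [hu]
    exact Nat.mul_dvd_mul_left m hXk
  exact Nat.dvd_antisymm (orderOf_dvd_of_pow_eq_one key2) (key1 _ (pow_orderOf_eq_one σ))

lemma stmt6_fixed_eq {L : Type*} [Field L] (σ : RingAut L) :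
    fixedSubfield σ = FixedPoints.subfield (Subgroup.zpowers σ) L := by
  ext x
  constructor
  · intro hx g
    have hsub : Subgroup.zpowers σ ≤ MulAction.stabilizer (RingAut L) x :=
      Subgroup.zpowers_le.mpr hx
    exact hsub g.2
  · intro hx
    exact hx ⟨σ, Subgroup.mem_zpowers σ⟩

lemma stmt6_fixed_finrank {L : Type*} [Field L] (σ : RingAut L) (h : 0 < orderOf σ) :
    Module.finrank (fixedSubfield σ) L = orderOf σ := by
  have hfin : Finite (Subgroup.zpowers σ) := by
    have : 0 < Nat.card (Subgroup.zpowers σ) := by rwa [Nat.card_zpowers]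
    exact (Nat.card_pos_iff.mp this).2
  letI : Fintype (Subgroup.zpowers σ) := Fintype.ofFinite _
  haveI : FaithfulSMul (Subgroup.zpowers σ) L :=
    ⟨fun {g₁ g₂} H => Subtype.ext (RingEquiv.ext fun x => H x)⟩
  rw [stmt6_fixed_eq, FixedPoints.finrank_eq_card, ← Nat.card_eq_fintype_card, Nat.card_zpowers]

lemma stmt6_fixed_findim {L : Type*} [Field L] (σ : RingAut L) (h : 0 < orderOf σ) :
    FiniteDimensional (fixedSubfield σ) L := by
  have hfin : Finite (Subgroup.zpowers σ) := by
    have : 0 < Nat.card (Subgroup.zpowers σ) := by rwa [Nat.card_zpowers]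
    exact (Nat.card_pos_iff.mp this).2
  letI : Fintype (Subgroup.zpowers σ) := Fintype.ofFinite _
  rw [stmt6_fixed_eq]
  infer_instance

end Aux

/-- With N(λ) of order q-1, {a_i x^j : 1 ≤ i ≤ m, 0 ≤ j ≤ q-2} is a basis of
F_{q^m}(x) over the fixed field K of φ_{q,λ}. -/
theorem stmt_6 (p s m : ℕ) [Fact p.Prime] (hs : 0 < s) (hm : 0 < m)
    (F : Type*) [Field F] [Fintype F] [CharP F p]
    (q : ℕ) (hq : q = p ^ s) (hcard : Fintype.card F = q ^ m)
    (lam : F) (hlam : lam ≠ 0)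
    (hnorm : orderOf (lam ^ ((q ^ m - 1) / (q - 1))) = q - 1)
    (Fq : Subfield F) (hFq : ∀ a : F, a ∈ Fq ↔ a ^ q = a)
    (a : Module.Basis (Fin m) Fq F)
    (e : RatFunc F ≃+* RatFunc F)
    (he : ∀ f : Polynomial F,
      e (algebraMap (Polynomial F) (RatFunc F) f) =
        algebraMap (Polynomial F) (RatFunc F)
          (∑ i ∈ Finset.range (f.natDegree + 1),
            Polynomial.C ((f.coeff i) ^ q * lam ^ i) * Polynomial.X ^ i)) :
    ∃ b : Module.Basis (Fin m × Fin (q - 1)) (fixedSubfield e) (RatFunc F),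
      ∀ (i : Fin m) (j : Fin (q - 1)),
        b (i, j) = algebraMap F (RatFunc F) (a i) * RatFunc.X ^ (j : ℕ) := by
  have hp2 : 2 ≤ p := (Fact.out : p.Prime).two_le
  have hq2 : 2 ≤ q := by
    rw [hq]
    calc 2 ≤ p := hp2
    _ = p ^ 1 := (pow_one p).symm
    _ ≤ p ^ s := Nat.pow_le_pow_right (by omega) hs
  -- basic action formulas
  have hC : ∀ c : F, e (algebraMap F (RatFunc F) c) = algebraMap F (RatFunc F) (c ^ q) := by
    intro c
    have h := he (Polynomial.C c)
    simp only [Polynomial.natDegree_C, zero_add, Finset.sum_range_one, Polynomial.coeff_C_zero,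
      pow_zero, mul_one, RatFunc.algebraMap_C] at h
    rw [RatFunc.algebraMap_eq_C] at *
    exact h
  have hX : e RatFunc.X = algebraMap F (RatFunc F) lam * RatFunc.X := by
    have h := he Polynomial.X
    simp only [Polynomial.natDegree_X, Finset.sum_range_succ, Finset.sum_range_zero,
      Polynomial.coeff_X_zero, Polynomial.coeff_X_one, one_pow, one_mul, pow_zero, mul_one,
      zero_pow (by omega : q ≠ 0), zero_mul, map_add, map_mul, map_one, Polynomial.C_0, map_zero,
      zero_add, pow_one, RatFunc.algebraMap_C, RatFunc.algebraMap_X] at h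
    rw [RatFunc.algebraMap_eq_C]
    exact h
  -- order of the automorphism
  have horder : orderOf (e : RingAut (RatFunc F)) = m * (q - 1) :=
    stmt6_orderOf q m hq2 hm hcard lam hnorm e hC hX
  have hpos : 0 < orderOf (e : RingAut (RatFunc F)) := by
    rw [horder]
    have : 1 ≤ q - 1 := by omega
    exact Nat.mul_pos hm this
  have hfr : Module.finrank (fixedSubfield e) (RatFunc F) = m * (q - 1) := by
    rw [stmt6_fixed_finrank e hpos, horder]
  have hfd : FiniteDimensional (fixedSubfield e) (RatFunc F) := stmt6_fixed_findim e hpos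
  -- spanning
  set K := fixedSubfield e with hK
  set A := algebraMap F (RatFunc F) with hA
  set v : Fin m × Fin (q-1) → RatFunc F :=
    fun ij => A (a ij.1) * RatFunc.X ^ (ij.2 : ℕ) with hv
  set S := Submodule.span K (Set.range v) with hS
  have hAlam : A lam ≠ 0 := by
    simp [hA, _root_.map_eq_zero, hlam]
  have hFqK : ∀ c : F, c ∈ Fq → A c ∈ K := by
    intro c hc
    show e (A c) = A c
    rw [hC c, (hFq c).mp hc]
  have hyK : (A lam)⁻¹ * RatFunc.X ^ (q - 1) ∈ K := by
    show e _ = _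
    rw [map_mul, map_inv₀, map_pow, hC, hX, mul_pow, map_pow]
    have hpow : (A lam) ^ q = (A lam) ^ (q-1) * A lam := by
      rw [← pow_succ]
      congr 1
      omega
    rw [hpow]
    have h1 : (A lam) ^ (q-1) ≠ 0 := pow_ne_zero _ hAlam
    field_simp
  have hstep : ∀ (t : ℕ) (c : F), A c * RatFunc.X ^ t ∈ S := by
    intro t
    induction t using Nat.strong_induction_on with
    | _ t ih =>
      intro c
      by_cases ht : t < q - 1
      · have hc : c = ∑ i, ((a.repr c i : F) * a i) := by
          conv_lhs => rw [← a.sum_repr c]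
          simp [Subfield.smul_def]
        rw [hc, map_sum, Finset.sum_mul]
        apply Submodule.sum_mem
        intro i _
        rw [map_mul, mul_assoc]
        have hmem : A (a.repr c i : F) ∈ K := hFqK _ (a.repr c i).2
        have : A (a.repr c i : F) * (A (a i) * RatFunc.X ^ t) =
            (⟨A (a.repr c i : F), hmem⟩ : K) • (A (a i) * RatFunc.X ^ t) := rfl
        rw [this]
        exact Submodule.smul_mem _ _ (Submodule.subset_span ⟨(i, ⟨t, ht⟩), rfl⟩)
      · push_neg at ht
        have hr : t - (q - 1) < t := by omega
        have heq : A c * RatFunc.X ^ t =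
            (⟨(A lam)⁻¹ * RatFunc.X ^ (q - 1), hyK⟩ : K) •
              (A (c * lam) * RatFunc.X ^ (t - (q - 1))) := by
          show _ = ((A lam)⁻¹ * RatFunc.X ^ (q - 1)) * (A (c * lam) * RatFunc.X ^ (t - (q - 1)))
          rw [map_mul]
          have hXt : (RatFunc.X : RatFunc F) ^ t =
              RatFunc.X ^ (q-1) * RatFunc.X ^ (t - (q-1)) := by
            rw [← pow_add]
            congr 1
            omega
          rw [hXt]
          field_simp
        rw [heq]
        exact Submodule.smul_mem _ _ (ih _ hr (c * lam))
  have hpoly : ∀ f : Polynomial F, algebraMap (Polynomial F) (RatFunc F) f ∈ S := by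
    intro f
    induction f using Polynomial.induction_on' with
    | add p r hp hr => rw [map_add]; exact Submodule.add_mem _ hp hr
    | monomial n c =>
      rw [← Polynomial.C_mul_X_pow_eq_monomial, map_mul, map_pow, RatFunc.algebraMap_C,
        RatFunc.algebraMap_X, ← RatFunc.algebraMap_eq_C]
      exact hstep n c
  have hmulmem : ∀ x y : RatFunc F, x ∈ S → y ∈ S → x * y ∈ S := by
    have hss : S * S ≤ S := by
      rw [hS, Submodule.span_mul_span]
      rw [Submodule.span_le]
      rintro z ⟨z1, ⟨⟨i1, j1⟩, rfl⟩, z2, ⟨⟨i2, j2⟩, rfl⟩, rfl⟩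
      show v (i1, j1) * v (i2, j2) ∈ (S : Set (RatFunc F))
      have : v (i1, j1) * v (i2, j2) =
          A (a i1 * a i2) * RatFunc.X ^ ((j1 : ℕ) + (j2 : ℕ)) := by
        simp only [hv, map_mul, pow_add]
        ring
      rw [this]
      exact hstep _ _
    intro x y hx hy
    exact hss (Submodule.mul_mem_mul hx hy)
  have hone : (1 : RatFunc F) ∈ S := by
    have := hstep 0 1
    simpa using this
  set Salg : Subalgebra K (RatFunc F) := S.toSubalgebra hone hmulmem with hSalg
  have hinv : ∀ z : RatFunc F, z ∈ S → z⁻¹ ∈ S := by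
    intro z hz
    haveI : Algebra.IsAlgebraic K (RatFunc F) := Algebra.IsAlgebraic.of_finite _ _
    have : ((⟨z, hz⟩ : Salg) : RatFunc F)⁻¹ ∈ Salg :=
      Salg.inv_mem_of_algebraic (Algebra.IsAlgebraic.isAlgebraic (z : RatFunc F))
    exact this
  have hspan : ⊤ ≤ S := by
    intro z _
    rw [← RatFunc.num_div_denom z, div_eq_mul_inv]
    exact hmulmem _ _ (hpoly _) (hinv _ (hpoly _))
  have hcardeq : Fintype.card (Fin m × Fin (q - 1)) = Module.finrank K (RatFunc F) := by
    rw [Fintype.card_prod, Fintype.card_fin, Fintype.card_fin, hfr]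
  refine ⟨basisOfTopLeSpanOfCardEqFinrank v hspan hcardeq, fun i j => ?_⟩
  rw [coe_basisOfTopLeSpanOfCardEqFinrank]
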